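/- The sequence w_n = ∑_{k=0}^{n} C(2k,k)^3 C(2n-2k,n-k) 16^{n-k} satisfies the recurrence (n+1)^3 w_{n+1} - 8(2n+1)(8n^2+8n+5) w_n + 4096 n^3 w_{n-1} = 0 for all n ≥ 1. -/

import Mathlib

open Finset

/-- The sequence `w_n`. -/
def wSeq (n : ℕ) : ℕ :=
  ∑ k ∈ Finset.range (n + 1),
    ((2 * k).choose k) ^ 3 * ((2 * n - 2 * k).choose (n - k)) * 16 ^ (n - k)

/-- Integer version of the summand, indexed by `k` and `m = n - k`. -/
private def T (k m : ℕ) : ℤ :=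
  (Nat.centralBinom k : ℤ) ^ 3 * Nat.centralBinom m * 16 ^ m

private lemma wSeq_eq (n : ℕ) : (wSeq n : ℤ) = ∑ k ∈ Finset.range (n + 1), T k (n - k) := by
  unfold wSeq T
  push_cast
  refine Finset.sum_congr rfl fun k hk => ?_
  have hk' : k ≤ n := Nat.lt_succ_iff.mp (Finset.mem_range.mp hk)
  have h2 : 2 * n - 2 * k = 2 * (n - k) := by omega
  rw [h2, Nat.centralBinom_eq_two_mul_choose, Nat.centralBinom_eq_two_mul_choose]

/-- The telescoping certificate. -/
private def g (k m : ℕ) : ℤ :=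
  32 * (k : ℤ) ^ 3 * (Nat.centralBinom k : ℤ) ^ 3 * catalan m * 16 ^ m

private lemma cb_cube (k : ℕ) :
    ((k : ℤ) + 1) ^ 3 * (Nat.centralBinom (k + 1) : ℤ) ^ 3
      = 8 * (2 * (k : ℤ) + 1) ^ 3 * (Nat.centralBinom k : ℤ) ^ 3 := by
  have h : ((k : ℤ) + 1) * (Nat.centralBinom (k + 1) : ℤ)
      = 2 * (2 * (k : ℤ) + 1) * (Nat.centralBinom k : ℤ) := by
    exact_mod_cast congrArg (Nat.cast : ℕ → ℤ) (Nat.succ_mul_centralBinom_succ k)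
  linear_combination (((k : ℤ) + 1) ^ 2 * (Nat.centralBinom (k + 1) : ℤ) ^ 2
    + ((k : ℤ) + 1) * (Nat.centralBinom (k + 1) : ℤ) * (2 * (2 * (k : ℤ) + 1) * (Nat.centralBinom k : ℤ))
    + (2 * (2 * (k : ℤ) + 1) * (Nat.centralBinom k : ℤ)) ^ 2) * h

/-- The key per-term telescoping identity, with `m = j + 1 ≥ 1` and `n = k + j + 1`. -/
private lemma key (k j : ℕ) :
    ((k : ℤ) + (j : ℤ) + 2) ^ 3 * T k (j + 2)
      - 8 * (2 * ((k : ℤ) + j + 1) + 1) * (8 * ((k : ℤ) + j + 1) ^ 2 + 8 * ((k : ℤ) + j + 1) + 5)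
          * T k (j + 1)
      + 4096 * ((k : ℤ) + j + 1) ^ 3 * T k j
      = g (k + 1) j - g k (j + 1) := by
  have hA3 := cb_cube k
  have hcat1 : ((j : ℤ) + 1) * (catalan j : ℤ) = (Nat.centralBinom j : ℤ) := by
    exact_mod_cast congrArg (Nat.cast : ℕ → ℤ) (succ_mul_catalan_eq_centralBinom j)
  have hcat2 : ((j : ℤ) + 2) * (catalan (j + 1) : ℤ) = (Nat.centralBinom (j + 1) : ℤ) := by
    have := congrArg (Nat.cast : ℕ → ℤ) (succ_mul_catalan_eq_centralBinom (j + 1))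
    push_cast at this ⊢
    linarith
  have hc1 : ((j : ℤ) + 1) * (Nat.centralBinom (j + 1) : ℤ)
      = 2 * (2 * (j : ℤ) + 1) * (Nat.centralBinom j : ℤ) := by
    exact_mod_cast congrArg (Nat.cast : ℕ → ℤ) (Nat.succ_mul_centralBinom_succ j)
  have hc2 : ((j : ℤ) + 2) * (Nat.centralBinom (j + 2) : ℤ)
      = 2 * (2 * (j : ℤ) + 3) * (Nat.centralBinom (j + 1) : ℤ) := by
    have := congrArg (Nat.cast : ℕ → ℤ) (Nat.succ_mul_centralBinom_succ (j + 1))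
    push_cast at this ⊢
    linarith
  -- abbreviations
  set A := (Nat.centralBinom k : ℤ) with hA
  set e := (catalan (j + 1) : ℤ) with he
  set d := (catalan j : ℤ) with hd
  -- c (j+1) = (j+2) * e
  have hcj1 : (Nat.centralBinom (j + 1) : ℤ) = ((j : ℤ) + 2) * e := hcat2.symm
  -- c j = (j+1) * d
  have hcj : (Nat.centralBinom j : ℤ) = ((j : ℤ) + 1) * d := hcat1.symm
  -- c (j+2) = 2 * (2j+3) * e
  have hcj2 : (Nat.centralBinom (j + 2) : ℤ) = 2 * (2 * (j : ℤ) + 3) * e := by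
    have h2 : ((j : ℤ) + 2) ≠ 0 := by positivity
    apply mul_left_cancel₀ h2
    rw [hc2, hcj1]; ring
  -- relation between e and d : (j+2) e = 2 (2j+1) d
  have hrel : ((j : ℤ) + 2) * e = 2 * (2 * (j : ℤ) + 1) * d := by
    have h1 : ((j : ℤ) + 1) ≠ 0 := by positivity
    apply mul_left_cancel₀ h1
    calc ((j : ℤ) + 1) * (((j : ℤ) + 2) * e) = ((j : ℤ) + 1) * (Nat.centralBinom (j + 1) : ℤ) := by
          rw [hcj1]
      _ = 2 * (2 * (j : ℤ) + 1) * (Nat.centralBinom j : ℤ) := hc1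
      _ = ((j : ℤ) + 1) * (2 * (2 * (j : ℤ) + 1) * d) := by rw [hcj]; ring
  unfold T g
  rw [hcj, hcj1, hcj2]
  push_cast
  apply mul_left_cancel₀ (show ((j : ℤ) + 2) ≠ 0 by positivity)
  linear_combination (-((j : ℤ) + 2) * 32 * d * 16 ^ j) * hA3
    + ((512 * (2 * ((j : ℤ) + 1) + 1) * ((k : ℤ) + j + 2) ^ 3
        - 16 * (8 * (2 * ((k : ℤ) + j + 1) + 1) * (8 * ((k : ℤ) + j + 1) ^ 2 + 8 * ((k : ℤ) + j + 1) + 5)) * ((j : ℤ) + 2)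
        + 512 * (k : ℤ) ^ 3) * A ^ 3 * 16 ^ j) * hrel

theorem w_recurrence (n : ℕ) (hn : 1 ≤ n) :
    ((n : ℤ) + 1) ^ 3 * wSeq (n + 1)
      - 8 * (2 * n + 1) * (8 * n ^ 2 + 8 * n + 5) * wSeq n
      + 4096 * (n : ℤ) ^ 3 * wSeq (n - 1) = 0 := by
  obtain ⟨p, rfl⟩ : ∃ p, n = p + 1 := ⟨n - 1, by omega⟩
  rw [wSeq_eq, wSeq_eq, wSeq_eq]
  simp only [Nat.add_sub_cancel]
  push_cast
  -- rewrite the three sums with common range `range (p+1)` plus boundary terms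
  have h1 : ∑ k ∈ Finset.range (p + 1 + 1 + 1), T k (p + 2 - k)
      = (∑ k ∈ Finset.range (p + 1), T k (p + 2 - k)) + T (p + 1) 1 + T (p + 1 + 1) 0 := by
    rw [Finset.sum_range_succ, Finset.sum_range_succ]
    congr 2
    · congr 1; omega
    · congr 1; omega
  have h2 : ∑ k ∈ Finset.range (p + 1 + 1), T k (p + 1 - k)
      = (∑ k ∈ Finset.range (p + 1), T k (p + 1 - k)) + T (p + 1) 0 := by
    rw [Finset.sum_range_succ]
    congr 2; omega
  rw [h1, h2]
  -- combine the three remaining sums into one telescoping sum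
  set q : ℤ := 8 * (2 * ((p : ℤ) + 1) + 1) * (8 * ((p : ℤ) + 1) ^ 2 + 8 * ((p : ℤ) + 1) + 5) with hq
  have hsum : ((p : ℤ) + 1 + 1) ^ 3 * ∑ k ∈ Finset.range (p + 1), T k (p + 2 - k)
      - q * ∑ k ∈ Finset.range (p + 1), T k (p + 1 - k)
      + 4096 * ((p : ℤ) + 1) ^ 3 * ∑ k ∈ Finset.range (p + 1), T k (p - k)
      = ∑ k ∈ Finset.range (p + 1), (g (k + 1) (p - k) - g k (p + 1 - k)) := by
    rw [Finset.mul_sum, Finset.mul_sum, Finset.mul_sum, ← Finset.sum_sub_distrib,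
      ← Finset.sum_add_distrib]
    refine Finset.sum_congr rfl fun k hk => ?_
    have hk' : k ≤ p := Nat.lt_succ_iff.mp (Finset.mem_range.mp hk)
    have e1 : p + 2 - k = (p - k) + 2 := by omega
    have e2 : p + 1 - k = (p - k) + 1 := by omega
    rw [e1, e2]
    have hkey := key k (p - k)
    have hcast : ((p : ℤ) - (k : ℤ)) = ((p - k : ℕ) : ℤ) := by
      push_cast [Nat.cast_sub hk']; ring
    have hpk : ((p - k : ℕ) : ℤ) = (p : ℤ) - k := by
      push_cast [Nat.cast_sub hk']; ring
    rw [hpk] at hkey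
    convert hkey using 2 <;> ring
  have htel : ∑ k ∈ Finset.range (p + 1), (g (k + 1) (p - k) - g k (p + 1 - k))
      = g (p + 1) 0 - g 0 (p + 1) := by
    have hcg : ∀ k ∈ Finset.range (p + 1),
        g (k + 1) (p - k) - g k (p + 1 - k)
          = (fun i => g i (p + 1 - i)) (k + 1) - (fun i => g i (p + 1 - i)) k := by
      intro k hk
      have hk' : k ≤ p := Nat.lt_succ_iff.mp (Finset.mem_range.mp hk)
      simp only
      congr 2
      omega
    rw [Finset.sum_congr rfl hcg, Finset.sum_range_sub (fun i => g i (p + 1 - i))]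
    simp
  have hg0 : g 0 (p + 1) = 0 := by unfold g; push_cast; ring
  have hgp : g (p + 1) 0 = 32 * ((p : ℤ) + 1) ^ 3 * (Nat.centralBinom (p + 1) : ℤ) ^ 3 := by
    unfold g
    push_cast [catalan_zero]
    ring
  rw [htel, hg0, hgp] at hsum
  have hB3 := cb_cube (p + 1)
  push_cast at hB3
  unfold T at hsum ⊢
  simp only [Nat.centralBinom_zero, show Nat.centralBinom 1 = 2 by decide] at hsum ⊢
  push_cast at hsum ⊢
  linear_combination hsum + hB3
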